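/- For every positive integer n there exists a set S ⊆ {1, 2, …, 4n²} with |S| = n that is a Sidon set; that is, whenever a, b, c, d ∈ S satisfy a + b = c + d, then {a, b} = {c, d}. -/

import Mathlib

private lemma sidon_div_mod (p a b x y : ℕ) (hp : 0 < p) (hx : x < p) (hy : y < p)
    (h : p * a + x = p * b + y) : a = b ∧ x = y := by
  have ha : a = b := by
    have h2 := congrArg (· / p) h
    simpa [Nat.mul_add_div hp, Nat.div_eq_of_lt hx, Nat.div_eq_of_lt hy] using h2
  subst ha
  exact ⟨rfl, Nat.add_left_cancel h⟩

private lemma sidon_key (p : ℕ) (hp : p.Prime) (hodd : Odd p) (i j k l : ℕ)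
    (hi : i < p) (hj : j < p) (hk : k < p) (hl : l < p)
    (hsum : i + j = k + l)
    (hsq : (p : ℤ) ∣ ((i:ℤ)^2 + (j:ℤ)^2 - (k:ℤ)^2 - (l:ℤ)^2)) :
    (i = k ∧ j = l) ∨ (i = l ∧ j = k) := by
  have hp2 : p ≠ 2 := by rintro rfl; exact (Nat.not_odd_iff_even.mpr (by norm_num)) hodd
  have hpZ : Prime (p : ℤ) := Nat.prime_iff_prime_int.mp hp
  have h0 : (i:ℤ) + j = k + l := by exact_mod_cast hsum
  have h1 : (p : ℤ) ∣ (((i:ℤ) - j) - ((k:ℤ) - l)) * (((i:ℤ) - j) + ((k:ℤ) - l)) := by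
    obtain ⟨t, ht⟩ := hsq
    exact ⟨2 * t, by linear_combination 2 * ht - (↑i + ↑j + ↑k + ↑l) * h0⟩
  have hpndvd2 : ¬ (p : ℤ) ∣ 2 := by
    intro h
    have h2 : p ∣ 2 := by exact_mod_cast h
    have := Nat.le_of_dvd (by norm_num) h2
    have := hp.two_le
    omega
  rcases hpZ.dvd_mul.mp h1 with hd | hd
  · have he : ((i:ℤ) - j) - ((k:ℤ) - l) = 2 * ((l:ℤ) - j) := by linear_combination h0
    rw [he] at hd
    have hdl : (p : ℤ) ∣ ((l:ℤ) - j) := (hpZ.dvd_mul.mp hd).resolve_left hpndvd2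
    have : (l:ℤ) - j = 0 := by
      refine Int.eq_zero_of_dvd_of_natAbs_lt_natAbs hdl ?_
      simp only [Int.natAbs_natCast]
      omega
    have hjl : j = l := by omega
    exact Or.inl ⟨by omega, hjl⟩
  · have he : ((i:ℤ) - j) + ((k:ℤ) - l) = 2 * ((i:ℤ) - l) := by linear_combination -h0
    rw [he] at hd
    have hdl : (p : ℤ) ∣ ((i:ℤ) - l) := (hpZ.dvd_mul.mp hd).resolve_left hpndvd2
    have : (i:ℤ) - l = 0 := by
      refine Int.eq_zero_of_dvd_of_natAbs_lt_natAbs hdl ?_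
      simp only [Int.natAbs_natCast]
      omega
    have hil : i = l := by omega
    exact Or.inr ⟨hil, by omega⟩

/-- Erdős–Turán: for every positive integer `n` there is a Sidon set of
`n` elements inside `{1, …, 4 n²}`. -/
theorem sidon_set_exists (n : ℕ) (hn : 0 < n) :
    ∃ S : Finset ℕ, S ⊆ Finset.Icc 1 (4 * n ^ 2) ∧ S.card = n ∧
      ∀ a ∈ S, ∀ b ∈ S, ∀ c ∈ S, ∀ d ∈ S,
        a + b = c + d → ({a, b} : Finset ℕ) = {c, d} := by
  rcases eq_or_lt_of_le (show 1 ≤ n from hn) with h1 | h2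
  · refine ⟨{1}, ?_, by simp [← h1], ?_⟩
    · intro x hx; simp at hx; subst hx; simp [Finset.mem_Icc]; nlinarith
    · intro a ha b hb c hc d hd _
      simp only [Finset.mem_singleton] at ha hb hc hd
      subst ha hb hc hd; rfl
  · -- n ≥ 2
    obtain ⟨p, hp, hnp, hp2n⟩ := Nat.exists_prime_lt_and_le_two_mul n (by omega)
    have hp0 : 0 < p := hp.pos
    have hpodd : Odd p := hp.odd_of_ne_two (by omega)
    have hple : p ≤ 2 * n - 1 := by
      rcases eq_or_lt_of_le hp2n with h | h
      · exfalso
        have h2n : (2 * n).Prime := h ▸ hp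
        rcases h2n.eq_one_or_self_of_dvd 2 ⟨n, rfl⟩ with h' | h' <;> omega
      · omega
    set f : ℕ → ℕ := fun i => 2 * p * i + i ^ 2 % p + 1 with hf
    have hmlt : ∀ m : ℕ, m ^ 2 % p < p := fun m => Nat.mod_lt _ hp0
    have hmono : StrictMono f := by
      intro a b hab
      have h1 : a + 1 ≤ b := hab
      have hra := hmlt a
      have hm : 2 * p * (a + 1) ≤ 2 * p * b := Nat.mul_le_mul_left _ h1
      have hs : 2 * p * (a + 1) = 2 * p * a + 2 * p := Nat.mul_succ _ _
      simp only [hf]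
      have hrb : 0 ≤ b ^ 2 % p := Nat.zero_le _
      linarith
    refine ⟨(Finset.range n).image f, ?_, ?_, ?_⟩
    · intro x hx
      simp only [Finset.mem_image, Finset.mem_range] at hx
      obtain ⟨i, hi, rfl⟩ := hx
      simp only [Finset.mem_Icc, hf]
      refine ⟨by omega, ?_⟩
      have hri := hmlt i
      have hs : 2 * p * (i + 1) = 2 * p * i + 2 * p := Nat.mul_succ _ _
      have step1 : 2 * p * i + i ^ 2 % p + 1 ≤ 2 * p * (i + 1) := by linarith
      have step2 : 2 * p * (i + 1) ≤ (2 * (2 * n - 1)) * n :=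
        Nat.mul_le_mul (by omega) (by omega)
      have step3 : (2 * (2 * n - 1)) * n ≤ 4 * n ^ 2 := by
        calc (2 * (2 * n - 1)) * n ≤ (4 * n) * n := Nat.mul_le_mul_right n (by omega)
        _ = 4 * n ^ 2 := by ring
      exact le_trans step1 (le_trans step2 step3)
    · rw [Finset.card_image_of_injective _ hmono.injective, Finset.card_range]
    · intro a ha b hb c hc d hd habcd
      simp only [Finset.mem_image, Finset.mem_range] at ha hb hc hd
      obtain ⟨i, hi, rfl⟩ := ha
      obtain ⟨j, hj, rfl⟩ := hb
      obtain ⟨k, hk, rfl⟩ := hc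
      obtain ⟨l, hl, rfl⟩ := hd
      have e1 : f i + f j = 2 * p * (i + j) + (i ^ 2 % p + j ^ 2 % p) + 2 := by
        simp only [hf]; ring
      have e2 : f k + f l = 2 * p * (k + l) + (k ^ 2 % p + l ^ 2 % p) + 2 := by
        simp only [hf]; ring
      rw [e1, e2] at habcd
      have h' : 2 * p * (i + j) + (i ^ 2 % p + j ^ 2 % p)
          = 2 * p * (k + l) + (k ^ 2 % p + l ^ 2 % p) := by
        exact Nat.add_right_cancel habcd
      obtain ⟨hsum, hmod⟩ := sidon_div_mod (2 * p) _ _ _ _ (by omega)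
        (by have := hmlt i; have := hmlt j; omega)
        (by have := hmlt k; have := hmlt l; omega) h'
      have hz : (i ^ 2 + j ^ 2) ≡ (k ^ 2 + l ^ 2) [MOD p] := by
        calc i ^ 2 + j ^ 2 ≡ i ^ 2 % p + j ^ 2 % p [MOD p] :=
              ((Nat.mod_modEq _ _).add (Nat.mod_modEq _ _)).symm
          _ = k ^ 2 % p + l ^ 2 % p := hmod
          _ ≡ k ^ 2 + l ^ 2 [MOD p] := (Nat.mod_modEq _ _).add (Nat.mod_modEq _ _)
      have hd := Int.ModEq.dvd (Int.natCast_modEq_iff.mpr hz)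
      have hsq : (p : ℤ) ∣ ((i:ℤ)^2 + (j:ℤ)^2 - (k:ℤ)^2 - (l:ℤ)^2) := by
        obtain ⟨t, ht⟩ := hd
        exact ⟨-t, by push_cast at ht ⊢; linear_combination -ht⟩
      rcases sidon_key p hp hpodd i j k l (by omega) (by omega) (by omega) (by omega) hsum hsq with
        ⟨rfl, rfl⟩ | ⟨rfl, rfl⟩
      · rfl
      · exact Finset.pair_comm _ _
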